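/- arXiv:2411.06579 — 3 statements merged into one kernel-verified Lean document; each statement's English description precedes it below -/
import Mathlib

section
/- Let 𝕂 be ℝ or ℂ and let Ω ⊂ 𝕂^d be a bounded convex domain with 0 ∈ Ω. For each unit vector x in the Euclidean unit sphere S of 𝕂^d ≅ ℝ^{(dim_ℝ𝕂)d}, let w(x) > 0 be the unique positive number with w(x)x ∈ ∂Ω. If σ : [a,b] → S is absolutely continuous and ξ(t) := w(σ(t))σ(t), then ξ is absolutely continuous and (ξ(t) + ℝ·ξ'(t)) ∩ Ω = ∅ for almost every t ∈ [a,b]. -/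
open Set Metric MeasureTheory
open scoped ENNReal

noncomputable section

/-- `σ` is absolutely continuous on `[a,b]`: it is the integral of an integrable density. -/
def ACOn {E : Type*} [NormedAddCommGroup E] [NormedSpace ℝ E] (σ : ℝ → E) (a b : ℝ) : Prop :=
  ∃ g : ℝ → E, IntervalIntegrable g volume a b ∧
    ∀ t ∈ Set.Icc a b, σ t = σ a + ∫ s in a..t, g s

variable (𝕜 : Type*) [RCLike 𝕜] {d : ℕ}

/-- The distance `δ_Ω^{(k)}(p; v)` from `p` to the boundary of `Ω`, measured as the supremum over
all `k`-dimensional `𝕜`-linear subspaces `V` containing `v` of the distance from `p` to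
`(p + V) ∩ ∂Ω` (with value `∞` when some such affine plane misses the boundary). -/
noncomputable def qhDelta (Ω : Set (EuclideanSpace 𝕜 (Fin d))) (k : ℕ)
    (p v : EuclideanSpace 𝕜 (Fin d)) : ℝ≥0∞ :=
  ⨆ (V : Submodule 𝕜 (EuclideanSpace 𝕜 (Fin d))) (_ : v ∈ V) (_ : Module.finrank 𝕜 V = k),
    EMetric.infEdist p ({q | ∃ w ∈ V, q = p + w} ∩ frontier Ω)

/-- The generalized `k`-quasi-hyperbolic metric `𝔮_Ω^{(k)}(p;v) = ‖v‖ / δ_Ω^{(k)}(p;v)`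
(interpreted as `0` when `δ_Ω^{(k)}(p;v) = ∞`). -/
noncomputable def qhNorm (Ω : Set (EuclideanSpace 𝕜 (Fin d))) (k : ℕ)
    (p v : EuclideanSpace 𝕜 (Fin d)) : ℝ :=
  ‖v‖ / (qhDelta 𝕜 Ω k p v).toReal

/-- The generalized `k`-quasi-hyperbolic distance: the infimum of `∫ 𝔮_Ω^{(k)}(σ; σ')` over
absolutely continuous curves in `Ω` joining the two points. -/
noncomputable def qhDist (Ω : Set (EuclideanSpace 𝕜 (Fin d))) (k : ℕ)
    (p q : EuclideanSpace 𝕜 (Fin d)) : ℝ :=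
  sInf {L : ℝ | ∃ (a b : ℝ) (σ : ℝ → EuclideanSpace 𝕜 (Fin d)), a ≤ b ∧ ACOn σ a b ∧
    (∀ t ∈ Set.Icc a b, σ t ∈ Ω) ∧ σ a = p ∧ σ b = q ∧
    L = ∫ t in a..b, qhNorm 𝕜 Ω k (σ t) (deriv σ t)}

/-- A (unit speed) geodesic segment for a distance function. -/
def IsGeodesicOn {X : Type*} (dist : X → X → ℝ) (γ : ℝ → X) (a b : ℝ) : Prop :=
  ∀ s ∈ Set.Icc a b, ∀ t ∈ Set.Icc a b, dist (γ s) (γ t) = |s - t|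

/-- Gromov hyperbolicity of a distance function, via `δ`-slim geodesic triangles. -/
def GromovHyperbolicDist {X : Type*} (dist : X → X → ℝ) : Prop :=
  ∃ δ : ℝ, 0 ≤ δ ∧
    ∀ (γ₁ γ₂ γ₃ : ℝ → X) (a₁ b₁ a₂ b₂ a₃ b₃ : ℝ),
      IsGeodesicOn dist γ₁ a₁ b₁ → IsGeodesicOn dist γ₂ a₂ b₂ → IsGeodesicOn dist γ₃ a₃ b₃ →
      γ₁ b₁ = γ₂ a₂ → γ₂ b₂ = γ₃ a₃ → γ₃ b₃ = γ₁ a₁ →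
      ∀ s ∈ Set.Icc a₁ b₁, ∃ t, (t ∈ Set.Icc a₂ b₂ ∧ dist (γ₁ s) (γ₂ t) ≤ δ) ∨
        (t ∈ Set.Icc a₃ b₃ ∧ dist (γ₁ s) (γ₃ t) ≤ δ)

/-- `n` is an `(r,δ)`-quasi-normal vector at `x ∈ ∂Ω`: `n` is a unit vector and
`dist(x + rn, ∂Ω) ≥ δ`. -/
def IsQuasiNormal (Ω : Set (EuclideanSpace 𝕜 (Fin d))) (r δ : ℝ)
    (x n : EuclideanSpace 𝕜 (Fin d)) : Prop :=
  ‖n‖ = 1 ∧ δ ≤ Metric.infDist (x + r • n) (frontier Ω)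

/-- `δ_Ω(p;v)`: the distance from `p` to the boundary along the `𝕜`-line through `p` in
direction `v`. -/
noncomputable def lineBdryDist (Ω : Set (EuclideanSpace 𝕜 (Fin d)))
    (p v : EuclideanSpace 𝕜 (Fin d)) : ℝ :=
  Metric.infDist p ({q | ∃ c : 𝕜, q = p + c • v} ∩ frontier Ω)


open Filter intervalIntegral
open scoped Topology NNReal

section Aux


variable {V : Type*} [NormedAddCommGroup V] [NormedSpace ℝ V] [FiniteDimensional ℝ V]
  [MeasurableSpace V] [BorelSpace V]

omit [FiniteDimensional ℝ V] [MeasurableSpace V] [BorelSpace V] in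
lemma norm_slope_le_of_lip {K : ℝ≥0} {f : ℝ → V} (hf : LipschitzWith K f) (t s : ℝ) :
    ‖slope f t s‖ ≤ (K : ℝ) := by
  rcases eq_or_ne s t with rfl | hst
  · simp [slope_def_module, NNReal.coe_nonneg]
  · rw [slope_def_module, norm_smul, norm_inv, Real.norm_eq_abs]
    have h2 : ‖f s - f t‖ ≤ K * |s - t| := by
      have := hf.dist_le_mul s t
      rwa [dist_eq_norm, dist_eq_norm, Real.norm_eq_abs] at this
    have habs : (0:ℝ) < |s - t| := abs_pos.2 (sub_ne_zero.2 hst)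
    calc |s - t|⁻¹ * ‖f s - f t‖ ≤ |s - t|⁻¹ * (K * |s - t|) :=
          mul_le_mul_of_nonneg_left h2 (inv_nonneg.2 (abs_nonneg _))
      _ = K := by field_simp

omit [FiniteDimensional ℝ V] [MeasurableSpace V] [BorelSpace V] in
lemma norm_deriv_le_of_lip {K : ℝ≥0} {f : ℝ → V} (hf : LipschitzWith K f) (t : ℝ) :
    ‖deriv f t‖ ≤ K := by
  by_cases h : DifferentiableAt ℝ f t
  · have hd := h.hasDerivAt
    rw [hasDerivAt_iff_tendsto_slope] at hd
    have : Tendsto (fun s => ‖slope f t s‖) (𝓝[≠] t) (𝓝 ‖deriv f t‖) :=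
      (continuous_norm.tendsto _).comp hd
    exact le_of_tendsto this (Eventually.of_forall fun s => norm_slope_le_of_lip hf t s)
  · simp [deriv_zero_of_not_differentiableAt h, NNReal.coe_nonneg]

/-- FTC for Lipschitz functions `ℝ → V`. -/
lemma lipschitz_ftc [SecondCountableTopology V] {K : ℝ≥0} {f : ℝ → V} (hf : LipschitzWith K f)
    {x y : ℝ} (hxy : x ≤ y) : ∫ t in x..y, deriv f t = f y - f x := by
  set D := deriv f with hD
  have hcont : Continuous f := hf.continuous
  have hfint : ∀ u v : ℝ, IntervalIntegrable f volume u v := fun u v =>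
    hcont.intervalIntegrable u v
  have hDmeas : Measurable D := measurable_deriv f
  -- the difference quotients
  set F : ℕ → ℝ → V := fun n t => (n + 1 : ℝ) • (f (t + 1/(n+1)) - f t) with hF
  have hFbound : ∀ n t, ‖F n t‖ ≤ (K : ℝ) := by
    intro n t
    have hn : (0:ℝ) < n + 1 := by positivity
    have h2 : ‖f (t + 1/(n+1)) - f t‖ ≤ K * (1/(n+1)) := by
      have := hf.dist_le_mul (t + 1/(n+1)) t
      rw [dist_eq_norm, dist_eq_norm] at this
      have he : ‖t + 1/(n+1) - t‖ = 1/((n:ℝ)+1) := by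
        rw [add_sub_cancel_left, Real.norm_eq_abs, abs_of_pos (by positivity)]
      rwa [he] at this
    calc ‖F n t‖ = (n+1) * ‖f (t + 1/(n+1)) - f t‖ := by
          rw [hF]; simp [norm_smul, abs_of_pos hn]
      _ ≤ (n+1) * (K * (1/(n+1))) := by
          exact mul_le_mul_of_nonneg_left h2 hn.le
      _ = K := by field_simp
  have hconv : ∀ᵐ t ∂(volume : Measure ℝ), Tendsto (fun n => F n t) atTop (𝓝 (D t)) := by
    filter_upwards [hf.ae_differentiableAt] with t ht
    have hd := ht.hasDerivAt
    rw [hasDerivAt_iff_tendsto_slope] at hd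
    have hseq : Tendsto (fun n : ℕ => t + 1/(n+1 : ℝ)) atTop (𝓝[≠] t) := by
      apply tendsto_nhdsWithin_of_tendsto_nhds_of_eventually_within
      · have : Tendsto (fun n : ℕ => 1/(n+1 : ℝ)) atTop (𝓝 0) :=
          tendsto_one_div_add_atTop_nhds_zero_nat
        simpa using (tendsto_const_nhds.add this)
      · filter_upwards with n
        have : (0:ℝ) < 1/(n+1) := by positivity
        simp only [mem_compl_iff, mem_singleton_iff]
        intro h
        nlinarith [h]
    have := hd.comp hseq
    convert this using 2 with n
    show F n t = slope f t (t + 1/(n+1))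
    rw [slope_def_module, hF]
    simp only [add_sub_cancel_left, one_div, inv_inv]
  -- dominated convergence
  have hFcont : ∀ n : ℕ, Continuous (F n) := by
    intro n
    exact continuous_const.smul ((hcont.comp (continuous_id.add continuous_const)).sub hcont)
  have hlim : Tendsto (fun n => ∫ t in Ioc x y, F n t) atTop (𝓝 (∫ t in Ioc x y, D t)) := by
    refine tendsto_integral_of_dominated_convergence (fun _ => (K : ℝ))
      (fun n => (hFcont n).aestronglyMeasurable) (integrable_const _) ?_ ?_
    · exact fun n => Eventually.of_forall fun t => hFbound n t
    · exact ae_restrict_of_ae hconv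
  -- averaging limit
  have havg : ∀ z : ℝ,
      Tendsto (fun n : ℕ => ((n : ℝ)+1) • ∫ t in z..(z + 1/(n+1)), f t) atTop (𝓝 (f z)) := by
    intro z
    have hdiff : ∀ n : ℕ, ((n : ℝ)+1) • (∫ t in z..(z + 1/(n+1)), f t) - f z
        = ((n : ℝ)+1) • ∫ t in z..(z + 1/(n+1)), (f t - f z) := by
      intro n
      have hn : ((n : ℝ)+1) ≠ 0 := by positivity
      rw [intervalIntegral.integral_sub (hfint _ _) (intervalIntegrable_const),
        intervalIntegral.integral_const, smul_sub, smul_smul, add_sub_cancel_left,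
        mul_one_div, div_self hn, one_smul]
    have hnorm : ∀ n : ℕ, ‖((n : ℝ)+1) • (∫ t in z..(z + 1/(n+1)), f t) - f z‖
        ≤ (K : ℝ) * (1/(n+1)) := by
      intro n
      have hc : (0:ℝ) < 1/(n+1) := by positivity
      rw [hdiff n, norm_smul, Real.norm_eq_abs, abs_of_pos (by positivity : (0:ℝ) < (n:ℝ)+1)]
      have hbd : ∀ t ∈ Set.Ioc z (z + 1/(n+1)), ‖f t - f z‖ ≤ (K : ℝ) * (1/(n+1)) := by
        intro t ht
        have h1 : ‖f t - f z‖ ≤ K * |t - z| := by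
          have := hf.dist_le_mul t z
          rwa [dist_eq_norm, dist_eq_norm, Real.norm_eq_abs] at this
        have h2 : |t - z| ≤ 1/(n+1) := by
          rw [abs_of_pos (by linarith [ht.1])]
          linarith [ht.2]
        exact h1.trans (mul_le_mul_of_nonneg_left h2 K.coe_nonneg)
      have := intervalIntegral.norm_integral_le_of_norm_le_const
        (C := (K : ℝ) * (1/(n+1))) (f := fun t => f t - f z) (a := z) (b := z + 1/(n+1)) ?_
      · calc ((n : ℝ)+1) * ‖∫ t in z..(z + 1/(n+1)), (f t - f z)‖
            ≤ ((n : ℝ)+1) * ((K : ℝ) * (1/(n+1)) * |z + 1/(n+1) - z|) :=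
              mul_le_mul_of_nonneg_left this (by positivity)
          _ = (K : ℝ) * (1/(n+1)) := by
              rw [add_sub_cancel_left, abs_of_pos hc]
              field_simp
      · intro t ht
        rw [Set.uIoc_of_le (by linarith : z ≤ z + 1/(n+1))] at ht
        exact hbd t ht
    have h0 : Tendsto (fun n : ℕ => (K : ℝ) * (1/(n+1))) atTop (𝓝 0) := by
      have : Tendsto (fun n : ℕ => 1/(n+1 : ℝ)) atTop (𝓝 0) :=
        tendsto_one_div_add_atTop_nhds_zero_nat
      simpa using this.const_mul (K : ℝ)
    have := squeeze_zero_norm hnorm h0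
    have h2 := this.add (tendsto_const_nhds (x := f z))
    simpa using h2
  -- computing the integral of F n
  have hcalc : ∀ n : ℕ, ∫ t in x..y, F n t
      = (((n : ℝ)+1) • ∫ t in y..(y + 1/(n+1)), f t)
        - (((n : ℝ)+1) • ∫ t in x..(x + 1/(n+1)), f t) := by
    intro n
    have h1 : ∫ t in x..y, F n t
        = ((n : ℝ)+1) • ((∫ t in x..y, f (t + 1/(n+1))) - ∫ t in x..y, f t) := by
      rw [hF]
      rw [intervalIntegral.integral_smul]
      congr 1
      exact intervalIntegral.integral_sub ((hcont.comp (continuous_id.add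
        continuous_const)).intervalIntegrable _ _) (hfint _ _)
    rw [h1, intervalIntegral.integral_comp_add_right]
    have h2 : (∫ t in (x + 1/(n+1))..(y + 1/(n+1)), f t) - ∫ t in x..y, f t
        = (∫ t in y..(y + 1/(n+1)), f t) - ∫ t in x..(x + 1/(n+1)), f t := by
      have ha : (∫ t in x..(x + 1/(n+1)), f t) + (∫ t in (x + 1/(n+1))..(y + 1/(n+1)), f t)
          = ∫ t in x..(y + 1/(n+1)), f t :=
        intervalIntegral.integral_add_adjacent_intervals (hfint _ _) (hfint _ _)
      have hb : (∫ t in x..y, f t) + (∫ t in y..(y + 1/(n+1)), f t)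
          = ∫ t in x..(y + 1/(n+1)), f t :=
        intervalIntegral.integral_add_adjacent_intervals (hfint _ _) (hfint _ _)
      rw [← ha] at hb
      rw [sub_eq_sub_iff_add_eq_add, add_comm, ← hb]
      abel
    rw [h2, smul_sub]
  have hlim2 : Tendsto (fun n => ∫ t in x..y, F n t) atTop (𝓝 (f y - f x)) := by
    simp only [hcalc]
    exact (havg y).sub (havg x)
  have heq : ∀ n, ∫ t in x..y, F n t = ∫ t in Ioc x y, F n t := fun n =>
    intervalIntegral.integral_of_le hxy
  rw [intervalIntegral.integral_of_le hxy]
  simp only [heq] at hlim2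
  exact tendsto_nhds_unique hlim hlim2



set_option maxHeartbeats 1000000 in
theorem stmt8_part1 {𝕜 : Type*} [RCLike 𝕜] {d : ℕ} (Ω : Set (EuclideanSpace 𝕜 (Fin d)))
    (hΩopen : IsOpen Ω) (hΩconv : Convex ℝ Ω) (hΩbdd : Bornology.IsBounded Ω)
    (h0 : (0 : EuclideanSpace 𝕜 (Fin d)) ∈ Ω)
    (w : EuclideanSpace 𝕜 (Fin d) → ℝ)
    (hw : ∀ x : EuclideanSpace 𝕜 (Fin d), ‖x‖ = 1 → 0 < w x ∧ w x • x ∈ frontier Ω)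
    (a b : ℝ) (hab : a ≤ b) (σ : ℝ → EuclideanSpace 𝕜 (Fin d))
    (hσAC : ACOn σ a b) (hσS : ∀ t ∈ Set.Icc a b, ‖σ t‖ = 1) :
    ACOn (fun t => w (σ t) • σ t) a b := by
  classical
  -- basic geometry of the gauge
  have hΩnhds : Ω ∈ 𝓝 (0 : EuclideanSpace 𝕜 (Fin d)) := hΩopen.mem_nhds h0
  have habs : Absorbent ℝ Ω := absorbent_nhds_zero hΩnhds
  obtain ⟨ε, hε, hball⟩ : ∃ ε > 0, ball (0 : EuclideanSpace 𝕜 (Fin d)) ε ⊆ Ω := Metric.mem_nhds_iff.1 hΩnhds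
  obtain ⟨R, hRpos, hΩR⟩ : ∃ R, 0 < R ∧ Ω ⊆ ball (0 : EuclideanSpace 𝕜 (Fin d)) R := by
    obtain ⟨r, hr⟩ := hΩbdd.subset_ball (0 : EuclideanSpace 𝕜 (Fin d))
    exact ⟨max r 1, lt_of_lt_of_le one_pos (le_max_right _ _),
      hr.trans (ball_subset_ball (le_max_left _ _))⟩
  have hgauge_lb : ∀ y : EuclideanSpace 𝕜 (Fin d), ‖y‖ / R ≤ gauge Ω y := by
    intro y
    have h1 := gauge_mono habs hΩR y
    rwa [gauge_ball hRpos.le] at h1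
  have hgauge_pos : ∀ y : EuclideanSpace 𝕜 (Fin d), ‖y‖ = 1 → 0 < gauge Ω y := fun y hy =>
    lt_of_lt_of_le (by rw [hy]; positivity) (hgauge_lb y)
  have hgauge_inv_le : ∀ y : EuclideanSpace 𝕜 (Fin d), ‖y‖ = 1 → (gauge Ω y)⁻¹ ≤ R := by
    intro y hy
    rw [← inv_inv R]
    refine inv_anti₀ (by positivity) ?_
    have := hgauge_lb y
    rw [hy, one_div] at this
    exact this
  have hglip : ∀ x y : EuclideanSpace 𝕜 (Fin d), |gauge Ω x - gauge Ω y| ≤ ε⁻¹ * ‖x - y‖ := by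
    intro x y
    have h1 : ball (0 : EuclideanSpace 𝕜 (Fin d)) (⟨ε, hε.le⟩ : ℝ≥0) ⊆ Ω := by simpa using hball
    have := (hΩconv.lipschitzWith_gauge (by exact_mod_cast hε) h1).dist_le_mul x y
    rw [Real.dist_eq, dist_eq_norm] at this
    exact this
  -- the radial projection map and its Lipschitz property on the sphere
  set Fm : EuclideanSpace 𝕜 (Fin d) → EuclideanSpace 𝕜 (Fin d) := fun y => (gauge Ω y)⁻¹ • y with hFm
  set CF : ℝ := R + R ^ 2 * ε⁻¹ with hCF
  have hCFpos : 0 < CF := by positivity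
  have hFlip : ∀ x y : EuclideanSpace 𝕜 (Fin d), ‖x‖ = 1 → ‖y‖ = 1 → ‖Fm x - Fm y‖ ≤ CF * ‖x - y‖ := by
    intro x y hx hy
    set gx := gauge Ω x
    set gy := gauge Ω y
    have hgx : 0 < gx := hgauge_pos x hx
    have hgy : 0 < gy := hgauge_pos y hy
    have hsplit : Fm x - Fm y = gx⁻¹ • (x - y) + (gx⁻¹ - gy⁻¹) • y := by
      simp only [hFm]
      module
    rw [hsplit]
    have h1 : ‖gx⁻¹ • (x - y)‖ ≤ R * ‖x - y‖ := by
      rw [norm_smul, Real.norm_eq_abs, abs_of_pos (by positivity)]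
      exact mul_le_mul_of_nonneg_right (hgauge_inv_le x hx) (norm_nonneg _)
    have h2 : ‖(gx⁻¹ - gy⁻¹) • y‖ ≤ R ^ 2 * ε⁻¹ * ‖x - y‖ := by
      rw [norm_smul, Real.norm_eq_abs, hy, mul_one]
      rw [inv_sub_inv hgx.ne' hgy.ne', abs_div, abs_of_pos (by positivity : (0:ℝ) < gx * gy)]
      have h3 : |gy - gx| ≤ ε⁻¹ * ‖x - y‖ := by
        rw [abs_sub_comm]
        exact hglip x y
      have h4 : (gx * gy)⁻¹ ≤ R ^ 2 := by
        have hx' := hgauge_inv_le x hx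
        have hy' := hgauge_inv_le y hy
        rw [mul_inv]
        calc gx⁻¹ * gy⁻¹ ≤ R * R := mul_le_mul hx' hy' (by positivity) hRpos.le
          _ = R ^ 2 := by ring
      calc |gy - gx| / (gx * gy) = (gx * gy)⁻¹ * |gy - gx| := by rw [div_eq_inv_mul]
        _ ≤ R ^ 2 * (ε⁻¹ * ‖x - y‖) := by
            exact mul_le_mul h4 h3 (abs_nonneg _) (by positivity)
        _ = R ^ 2 * ε⁻¹ * ‖x - y‖ := by ring
    calc ‖gx⁻¹ • (x - y) + (gx⁻¹ - gy⁻¹) • y‖ ≤ ‖gx⁻¹ • (x - y)‖ + ‖(gx⁻¹ - gy⁻¹) • y‖ :=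
          norm_add_le _ _
      _ ≤ R * ‖x - y‖ + R ^ 2 * ε⁻¹ * ‖x - y‖ := add_le_add h1 h2
      _ = CF * ‖x - y‖ := by rw [hCF]; ring
  -- `w` agrees with the inverse gauge on the sphere
  have hwF : ∀ x : EuclideanSpace 𝕜 (Fin d), ‖x‖ = 1 → w x • x = Fm x := by
    intro x hx
    obtain ⟨hwpos, hwfr⟩ := hw x hx
    have h1 : gauge Ω (w x • x) = 1 := (gauge_eq_one_iff_mem_frontier hΩconv hΩnhds).2 hwfr
    rw [gauge_smul_of_nonneg hwpos.le, smul_eq_mul] at h1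
    rw [hFm]
    have : w x = (gauge Ω x)⁻¹ := eq_inv_of_mul_eq_one_left h1
    rw [this]
  -- measurable structure on the target space
  letI : MeasurableSpace (EuclideanSpace 𝕜 (Fin d)) := borel _
  haveI : BorelSpace (EuclideanSpace 𝕜 (Fin d)) := ⟨rfl⟩
  -- absolute continuity data for σ
  obtain ⟨g, hgint, hgrep⟩ := hσAC
  have hgIoc : IntegrableOn g (Ioc a b) volume := hgint.1
  set gm := hgIoc.aestronglyMeasurable.mk g with hgm
  have hgm_meas : StronglyMeasurable gm := hgIoc.aestronglyMeasurable.stronglyMeasurable_mk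
  have hgm_ae : g =ᵐ[volume.restrict (Ioc a b)] gm := hgIoc.aestronglyMeasurable.ae_eq_mk
  set gt0 : ℝ → EuclideanSpace 𝕜 (Fin d) := (Ioc a b).indicator gm with hgt0
  have hgt_meas : StronglyMeasurable gt0 := hgm_meas.indicator measurableSet_Ioc
  have hgt_int : Integrable gt0 volume := by
    have h1 : IntegrableOn gm (Ioc a b) volume := hgIoc.congr hgm_ae
    exact h1.integrable_indicator measurableSet_Ioc
  have hggt : g =ᵐ[volume.restrict (Ioc a b)] gt0 := by
    refine hgm_ae.trans ?_
    refine (ae_restrict_iff' measurableSet_Ioc).2 (Eventually.of_forall fun s hs => ?_)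
    simp [hgt0, indicator_of_mem hs]
  -- the speed function and arc-length reparametrization
  set ρf : ℝ → ℝ := fun s => 1 + ‖gt0 s‖ with hρf
  have hρmeas : Measurable ρf := measurable_const.add hgt_meas.measurable.norm
  have hρint : ∀ x y : ℝ, IntervalIntegrable ρf volume x y := fun x y =>
    intervalIntegrable_const.add hgt_int.norm.intervalIntegrable
  have hρ1 : ∀ s, 1 ≤ ρf s := fun s => le_add_of_nonneg_right (norm_nonneg _)
  have hρ0 : ∀ s, 0 ≤ ρf s := fun s => zero_le_one.trans (hρ1 s)
  set φ : ℝ → ℝ := fun t => ∫ s in a..t, ρf s with hφ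
  have hφa : φ a = 0 := intervalIntegral.integral_same
  have hφcont : Continuous φ := intervalIntegral.continuous_primitive hρint a
  have hφdiff : ∀ x y : ℝ, φ y - φ x = ∫ s in x..y, ρf s := by
    intro x y
    have h1 := intervalIntegral.integral_add_adjacent_intervals (hρint a x) (hρint x y)
    have h2 : φ x = ∫ s in a..x, ρf s := rfl
    have h3 : φ y = ∫ s in a..y, ρf s := rfl
    rw [h2, h3]; linarith
  have hφexp : ∀ x y : ℝ, x ≤ y → y - x ≤ φ y - φ x := by
    intro x y hxy
    rw [hφdiff]
    have h1 : ∫ _ in x..y, (1:ℝ) ≤ ∫ s in x..y, ρf s :=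
      intervalIntegral.integral_mono_on hxy intervalIntegrable_const (hρint x y)
        (fun s _ => hρ1 s)
    simpa using h1
  have hφmono : StrictMono φ := fun x y hxy => by have := hφexp x y hxy.le; linarith
  have hφsurj : Function.Surjective φ := by
    apply hφcont.surjective
    · refine tendsto_atTop_mono' atTop ?_ (tendsto_atTop_add_const_right atTop (-a) tendsto_id)
      filter_upwards [eventually_ge_atTop a] with t hta
      have h1 := hφexp a t hta
      rw [hφa] at h1
      simpa using by linarith
    · refine tendsto_atBot_mono' atBot ?_ (tendsto_atBot_add_const_right atBot (-a) tendsto_id)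
      filter_upwards [eventually_le_atBot a] with t hta
      have h1 := hφexp t a hta
      rw [hφa] at h1
      simpa using by linarith
  set e : ℝ ≃o ℝ := StrictMono.orderIsoOfSurjective φ hφmono hφsurj with he
  set ψ : ℝ → ℝ := fun u => e.symm u with hψ
  have hφψ : ∀ u, φ (ψ u) = u := fun u => e.apply_symm_apply u
  have hψφ : ∀ t, ψ (φ t) = t := fun t => e.symm_apply_apply t
  have hψmono : Monotone ψ := fun u v huv => e.symm.monotone huv
  have hemb : MeasurableEmbedding φ := e.toHomeomorph.measurableEmbedding
  have hpre : ∀ u v : ℝ, φ ⁻¹' (Ioc u v) = Ioc (ψ u) (ψ v) := by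
    intro u v
    ext s
    simp only [mem_preimage, mem_Ioc]
    constructor
    · rintro ⟨h1, h2⟩
      constructor
      · have := e.symm.strictMono h1
        rwa [show e.symm (φ s) = s from hψφ s] at this
      · have := e.symm.monotone h2
        rwa [show e.symm (φ s) = s from hψφ s] at this
    · rintro ⟨h1, h2⟩
      constructor
      · have := hφmono h1
        rwa [hφψ u] at this
      · have := hφmono.monotone h2
        rwa [hφψ v] at this
  -- the clamp map
  set c : ℝ → ℝ := fun t => max a (min b t) with hc
  have hcmem : ∀ t, c t ∈ Icc a b := fun t => ⟨le_max_left _ _, max_le hab (min_le_left _ _)⟩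
  have hcmono : Monotone c := fun x y hxy => max_le_max le_rfl (min_le_min le_rfl hxy)
  have hceq : ∀ t ∈ Icc a b, c t = t := by
    intro t ht
    rw [hc]
    simp only
    rw [min_eq_right ht.2, max_eq_right ht.1]
  have hcIoc : ∀ u v : ℝ, u ≤ v → Ioc (c u) (c v) ⊆ Ioc u v := by
    intro u v huv s hs
    constructor
    · rcases le_total u b with hub | hub
      · have h1 : u ≤ c u := by
          rw [hc]; simp only
          rw [min_eq_right hub]
          exact le_max_right _ _
        exact lt_of_le_of_lt h1 hs.1
      · exfalso
        have h1 : c u = b := by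
          rw [hc]; simp only [min_eq_left hub, max_eq_right hab]
        have h2 : c v = b := by
          rw [hc]; simp only [min_eq_left (hub.trans huv), max_eq_right hab]
        rw [h1, h2] at hs
        exact absurd hs.2 (not_le.2 hs.1)
    · rcases le_total a v with hva | hva
      · have h1 : c v ≤ v := by
          rw [hc]; simp only
          exact max_le hva (min_le_right _ _)
        exact hs.2.trans h1
      · exfalso
        have h1 : c v = a := by
          rw [hc]; simp only
          rw [min_eq_right (hva.trans hab), max_eq_left hva]
        have h2 : c u = a := by
          rw [hc]; simp only
          rw [min_eq_right ((huv.trans hva).trans hab), max_eq_left (huv.trans hva)]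
        rw [h1, h2] at hs
        exact absurd hs.2 (not_le.2 hs.1)
  -- increments of σ are controlled by increments of φ
  have hgsub : ∀ x y : ℝ, x ∈ Icc a b → y ∈ Icc a b → IntervalIntegrable g volume x y := by
    intro x y hx hy
    exact hgint.mono_set (uIcc_subset_uIcc (Icc_subset_uIcc hx) (Icc_subset_uIcc hy))
  have hφIoc : ∀ x y : ℝ, x ≤ y → φ y - φ x = ∫ s in Ioc x y, ρf s := by
    intro x y hxy
    rw [hφdiff, intervalIntegral.integral_of_le hxy]
  have hσsub : ∀ x y : ℝ, x ∈ Icc a b → y ∈ Icc a b → x ≤ y →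
      ‖σ y - σ x‖ ≤ φ y - φ x := by
    intro x y hx hy hxy
    have h1 : σ y - σ x = ∫ s in x..y, g s := by
      rw [hgrep y hy, hgrep x hx, add_sub_add_left_eq_sub]
      exact (intervalIntegral.integral_interval_sub_left
        (hgsub a y (left_mem_Icc.2 hab) hy) (hgsub a x (left_mem_Icc.2 hab) hx))
    have h2 : ∫ s in x..y, g s = ∫ s in x..y, gt0 s := by
      have hsub : Ioc x y ⊆ Ioc a b := Ioc_subset_Ioc hx.1 hy.2
      rw [intervalIntegral.integral_of_le hxy, intervalIntegral.integral_of_le hxy]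
      exact integral_congr_ae (ae_restrict_of_ae_restrict_of_subset hsub hggt)
    have h3 : ‖∫ s in x..y, gt0 s‖ ≤ ∫ s in x..y, ‖gt0 s‖ :=
      intervalIntegral.norm_integral_le_integral_norm hxy
    have h4 : ∫ s in x..y, ‖gt0 s‖ ≤ ∫ s in x..y, ρf s :=
      intervalIntegral.integral_mono_on hxy hgt_int.norm.intervalIntegrable (hρint x y)
        (fun s _ => le_add_of_nonneg_left zero_le_one)
    rw [h1, h2, hφdiff]
    exact h3.trans h4
  -- the reparametrized boundary curve is Lipschitz
  set η : ℝ → EuclideanSpace 𝕜 (Fin d) := fun u => Fm (σ (c (ψ u))) with hη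
  have hηkey : ∀ u v : ℝ, u ≤ v → ‖η v - η u‖ ≤ CF * (v - u) := by
    intro u v huv
    set x := c (ψ u) with hx
    set y := c (ψ v) with hy
    have hxI : x ∈ Icc a b := hcmem _
    have hyI : y ∈ Icc a b := hcmem _
    have hxy : x ≤ y := hcmono (hψmono huv)
    have h1 : ‖η v - η u‖ ≤ CF * ‖σ y - σ x‖ := hFlip _ _ (hσS y hyI) (hσS x hxI)
    have h2 : ‖σ y - σ x‖ ≤ φ y - φ x := hσsub x y hxI hyI hxy
    have h3 : φ y - φ x ≤ v - u := by
      have h4 : φ (ψ v) - φ (ψ u) = ∫ s in Ioc (ψ u) (ψ v), ρf s := hφIoc _ _ (hψmono huv)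
      have h5 : Ioc x y ⊆ Ioc (ψ u) (ψ v) := hcIoc _ _ (hψmono huv)
      have h6 : ∫ s in Ioc x y, ρf s ≤ ∫ s in Ioc (ψ u) (ψ v), ρf s := by
        refine setIntegral_mono_set (hρint (ψ u) (ψ v)).1 ?_ (HasSubset.Subset.eventuallyLE h5)
        exact Eventually.of_forall fun s => hρ0 s
      have h7 := hφIoc x y hxy
      rw [hφψ u, hφψ v] at h4
      linarith
    calc ‖η v - η u‖ ≤ CF * ‖σ y - σ x‖ := h1
      _ ≤ CF * (φ y - φ x) := mul_le_mul_of_nonneg_left h2 hCFpos.le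
      _ ≤ CF * (v - u) := mul_le_mul_of_nonneg_left h3 hCFpos.le
  have hηLip : LipschitzWith CF.toNNReal η := by
    rw [lipschitzWith_iff_dist_le_mul]
    intro u v
    rw [Real.coe_toNNReal _ hCFpos.le]
    rcases le_total u v with h | h
    · rw [dist_eq_norm, norm_sub_rev, Real.dist_eq, abs_of_nonpos (by linarith)]
      have := hηkey u v h
      linarith
    · rw [dist_eq_norm, Real.dist_eq, abs_of_nonneg (by linarith)]
      have := hηkey v u h
      linarith
  -- FTC for the Lipschitz curve η
  have hftc : ∀ t ∈ Icc a b, ∫ u in (0:ℝ)..(φ t), deriv η u = η (φ t) - η 0 := by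
    intro t ht
    have h0t : (0:ℝ) ≤ φ t := by rw [← hφa]; exact hφmono.monotone ht.1
    exact lipschitz_ftc hηLip h0t
  set D : ℝ → EuclideanSpace 𝕜 (Fin d) := deriv η with hD
  have hDmeas : StronglyMeasurable D := (measurable_deriv η).stronglyMeasurable
  have hDbd : ∀ u, ‖D u‖ ≤ CF := fun u => by
    have := norm_deriv_le_of_lip hηLip u
    rwa [Real.coe_toNNReal _ hCFpos.le] at this
  -- the density for the boundary curve
  set hfun : ℝ → EuclideanSpace 𝕜 (Fin d) := fun s => ρf s • D (φ s) with hhfun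
  have hhmeas : StronglyMeasurable hfun :=
    (hρmeas.stronglyMeasurable).smul (hDmeas.comp_measurable hφcont.measurable)
  have hhint : IntervalIntegrable hfun volume a b := by
    rw [intervalIntegrable_iff_integrableOn_Ioc_of_le hab]
    refine Integrable.mono' ((hρint a b).1.const_mul CF) hhmeas.aestronglyMeasurable ?_
    refine Eventually.of_forall fun s => ?_
    have h1 : ‖hfun s‖ = ρf s * ‖D (φ s)‖ := by
      rw [hhfun]
      simp only
      rw [norm_smul, Real.norm_eq_abs, abs_of_nonneg (hρ0 s)]
    rw [h1]
    calc ρf s * ‖D (φ s)‖ ≤ ρf s * CF := mul_le_mul_of_nonneg_left (hDbd _) (hρ0 s)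
      _ = CF * ρf s := mul_comm _ _
  -- change of variables
  set ν : Measure ℝ := volume.withDensity (fun s => ENNReal.ofReal (ρf s)) with hν
  have hmap : Measure.map φ ν = volume := by
    refine (Measure.ext_of_Ioc volume (Measure.map φ ν) (fun u v huv => ?_)).symm
    rw [Measure.map_apply hemb.measurable measurableSet_Ioc, hpre u v, hν,
      withDensity_apply _ measurableSet_Ioc]
    have hψuv : ψ u ≤ ψ v := hψmono huv.le
    have h1 : ∫⁻ s in Ioc (ψ u) (ψ v), ENNReal.ofReal (ρf s)
        = ENNReal.ofReal (∫ s in Ioc (ψ u) (ψ v), ρf s) :=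
      (ofReal_integral_eq_lintegral_ofReal (hρint _ _).1
        (Eventually.of_forall fun s => hρ0 s)).symm
    rw [h1, ← hφIoc _ _ hψuv, hφψ, hφψ, Real.volume_Ioc]
  have hchange : ∀ t ∈ Icc a b, ∫ s in a..t, hfun s = ∫ u in (0:ℝ)..(φ t), D u := by
    intro t ht
    have h0t : (0:ℝ) ≤ φ t := by rw [← hφa]; exact hφmono.monotone ht.1
    rw [intervalIntegral.integral_of_le ht.1, intervalIntegral.integral_of_le h0t]
    have h1 : φ ⁻¹' (Ioc 0 (φ t)) = Ioc a t := by
      rw [← hφa, hpre, hψφ, hψφ]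
    refine Eq.symm ?_
    calc ∫ u in Ioc 0 (φ t), D u = ∫ u in Ioc 0 (φ t), D u ∂(Measure.map φ ν) := by rw [hmap]
      _ = ∫ u, D u ∂(Measure.map φ (ν.restrict (Ioc a t))) := by
          rw [hemb.restrict_map, h1]
      _ = ∫ s, D (φ s) ∂(ν.restrict (Ioc a t)) :=
          integral_map hφcont.measurable.aemeasurable hDmeas.aestronglyMeasurable
      _ = ∫ s, D (φ s)
            ∂((volume.restrict (Ioc a t)).withDensity fun s => ENNReal.ofReal (ρf s)) := by
          rw [hν, restrict_withDensity measurableSet_Ioc]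
      _ = ∫ s in Ioc a t, hfun s := by
          have hmeas2 : Measurable fun s => (ρf s).toNNReal := hρmeas.real_toNNReal
          have h2 := integral_withDensity_eq_integral_smul (μ := volume.restrict (Ioc a t))
            hmeas2 (fun s => D (φ s))
          rw [show (fun s => ENNReal.ofReal (ρf s)) = (fun s => ((ρf s).toNNReal : ℝ≥0∞))
            from rfl]
          rw [h2]
          refine integral_congr_ae (Eventually.of_forall fun s => ?_)
          rw [hhfun]
          simp only
          rw [NNReal.smul_def, Real.coe_toNNReal _ (hρ0 s)]
  -- assembly
  refine ⟨hfun, hhint, fun t ht => ?_⟩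
  have h1 : w (σ t) • σ t = η (φ t) := by
    rw [hη]
    simp only
    rw [hψφ, hceq t ht, hwF (σ t) (hσS t ht)]
  have h2 : w (σ a) • σ a = η 0 := by
    rw [← hφa, hη]
    simp only
    rw [hψφ, hceq a (left_mem_Icc.2 hab), hwF (σ a) (hσS a (left_mem_Icc.2 hab))]
  simp only
  rw [h1, h2, hchange t ht]
  have h3 := hftc t ht
  rw [hD] at h3
  rw [h3]
  abel


theorem stmt8_part2 {𝕜 : Type*} [RCLike 𝕜] {d : ℕ} (Ω : Set (EuclideanSpace 𝕜 (Fin d)))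
    (hΩopen : IsOpen Ω) (hΩconv : Convex ℝ Ω)
    (w : EuclideanSpace 𝕜 (Fin d) → ℝ)
    (hw : ∀ x : EuclideanSpace 𝕜 (Fin d), ‖x‖ = 1 → 0 < w x ∧ w x • x ∈ frontier Ω)
    (a b : ℝ) (σ : ℝ → EuclideanSpace 𝕜 (Fin d))
    (hσS : ∀ t ∈ Set.Icc a b, ‖σ t‖ = 1) :
      ∀ᵐ t ∂(volume.restrict (Set.Icc a b)),
        ∀ ρ : ℝ, w (σ t) • σ t + ρ • deriv (fun u => w (σ u) • σ u) t ∉ Ω := by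
  set ξ : ℝ → EuclideanSpace 𝕜 (Fin d) := fun u => w (σ u) • σ u with hξ
  have hnotmem : ∀ x, x ∈ frontier Ω → x ∉ Ω := by
    intro x hx hmem
    exact hx.2 (by rwa [hΩopen.interior_eq])
  have hae : ∀ᵐ t ∂(volume.restrict (Set.Icc a b)), t ∈ Ioo a b := by
    have h2 : ∀ᵐ t ∂(volume : Measure ℝ), t ∉ ({a, b} : Set ℝ) := by
      have : volume ({a, b} : Set ℝ) = 0 :=
        (Set.Finite.insert a (Set.finite_singleton b)).measure_zero _
      exact (MeasureTheory.measure_eq_zero_iff_ae_notMem).1 this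
    rw [ae_restrict_iff' measurableSet_Icc]
    filter_upwards [h2] with t ht hticc
    refine ⟨lt_of_le_of_ne hticc.1 ?_, lt_of_le_of_ne hticc.2 ?_⟩
    · exact fun h => ht (by simp [← h])
    · exact fun h => ht (by simp [h])
  filter_upwards [hae] with t ht
  intro ρ
  have htI : t ∈ Set.Icc a b := Ioo_subset_Icc_self ht
  have hfr : ξ t ∈ frontier Ω := (hw (σ t) (hσS t htI)).2
  by_cases hdiff : DifferentiableAt ℝ ξ t
  · obtain ⟨f, hfsep⟩ := geometric_hahn_banach_open_point hΩconv hΩopen (hnotmem _ hfr)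
    have hcl : ∀ y ∈ closure Ω, f y ≤ f (ξ t) := fun y hy =>
      le_on_closure (fun z hz => (hfsep z hz).le) f.continuous.continuousOn
        continuousOn_const hy
    have hmax : IsLocalMax (fun u => f (ξ u)) t := by
      filter_upwards [Ioo_mem_nhds ht.1 ht.2] with s hs
      exact hcl _ (frontier_subset_closure ((hw (σ s) (hσS s (Ioo_subset_Icc_self hs))).2))
    have hder : HasDerivAt (fun u => f (ξ u)) (f (deriv ξ t)) t :=
      (f.hasFDerivAt (x := ξ t)).comp_hasDerivAt t hdiff.hasDerivAt
    have hzero : f (deriv ξ t) = 0 := hmax.hasDerivAt_eq_zero hder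
    intro hmem
    have hlt := hfsep _ hmem
    simp only [map_add, f.map_smul, hzero, smul_zero, add_zero] at hlt
    have hlt' : w (σ t) • f (σ t) < w (σ t) • f (σ t) := by
      simpa only [hξ, f.map_smul] using hlt
    exact lt_irrefl _ hlt'
  · rw [deriv_zero_of_not_differentiableAt hdiff, smul_zero, add_zero]
    exact hnotmem _ hfr

end Aux

/-- Lemma 6.4: for an absolutely continuous curve `σ` in the unit sphere, the
radial projection `ξ(t) = w(σ(t)) σ(t)` to the boundary of a bounded convex domain `Ω ∋ 0` is
absolutely continuous, and for almost every `t` the line `ξ(t) + ℝ·ξ'(t)` misses `Ω`. -/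
theorem stmt_8 {𝕜 : Type*} [RCLike 𝕜] {d : ℕ} (Ω : Set (EuclideanSpace 𝕜 (Fin d)))
    (hΩopen : IsOpen Ω) (hΩconv : Convex ℝ Ω) (hΩbdd : Bornology.IsBounded Ω)
    (h0 : (0 : EuclideanSpace 𝕜 (Fin d)) ∈ Ω)
    (w : EuclideanSpace 𝕜 (Fin d) → ℝ)
    (hw : ∀ x : EuclideanSpace 𝕜 (Fin d), ‖x‖ = 1 → 0 < w x ∧ w x • x ∈ frontier Ω)
    (a b : ℝ) (hab : a ≤ b) (σ : ℝ → EuclideanSpace 𝕜 (Fin d))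
    (hσAC : ACOn σ a b) (hσS : ∀ t ∈ Set.Icc a b, ‖σ t‖ = 1) :
    ACOn (fun t => w (σ t) • σ t) a b ∧
      ∀ᵐ t ∂(volume.restrict (Set.Icc a b)),
        ∀ ρ : ℝ, w (σ t) • σ t + ρ • deriv (fun u => w (σ u) • σ u) t ∉ Ω := by
  exact ⟨stmt8_part1 Ω hΩopen hΩconv hΩbdd h0 w hw a b hab σ hσAC hσS,
    stmt8_part2 Ω hΩopen hΩconv w hw a b σ hσS⟩
end
end

section
/- Let 𝕂 be ℝ or ℂ, let Ω ⊂ 𝕂^d be a bounded convex domain, let p ∈ Ω, let n be a Euclidean unit vector and v₀ ∈ 𝕂^d a nonzero vector, and set δ₁ := δ_Ω(p;n), δ₂ := δ_Ω(p;v₀). Then for every s ∈ ℝ, the vector v = sn + v₀ satisfies δ_Ω(p;v) ≥ ‖v‖ / ( |s|/δ₁ + ‖v₀‖/δ₂ ). -/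
open Set Metric MeasureTheory
open scoped ENNReal

noncomputable section

variable (𝕜 : Type*) [RCLike 𝕜] {d : ℕ}

open Set.Notation in
lemma cross_frontier' {X : Type*} [TopologicalSpace X] {Ω s : Set X}
    (hΩ : IsOpen Ω) (hs : IsPreconnected s) {x y : X} (hx : x ∈ s) (hxΩ : x ∈ Ω)
    (hy : y ∈ s) (hyΩ : y ∉ Ω) : (s ∩ frontier Ω).Nonempty := by
  by_contra h
  rw [Set.not_nonempty_iff_eq_empty] at h
  have hdisj : Disjoint (frontier Ω) s := by
    rw [Set.disjoint_iff_inter_eq_empty, Set.inter_comm]; exact h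
  haveI : PreconnectedSpace s := Subtype.preconnectedSpace hs
  have hclopen := isClopen_preimage_val hΩ hdisj
  have huniv := hclopen.eq_univ ⟨⟨x, hx⟩, hxΩ⟩
  have : (⟨y, hy⟩ : s) ∈ s ↓∩ Ω := huniv ▸ Set.mem_univ _
  exact hyΩ this

lemma mem_of_lt_lineBdryDist_aux {𝕜 : Type*} [RCLike 𝕜] {d : ℕ}
    {Ω : Set (EuclideanSpace 𝕜 (Fin d))} (hΩopen : IsOpen Ω)
    {p v : EuclideanSpace 𝕜 (Fin d)} (hp : p ∈ Ω) {c : 𝕜}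
    (hc : ‖c‖ * ‖v‖ < lineBdryDist 𝕜 Ω p v) : p + c • v ∈ Ω := by
  by_contra hq
  obtain ⟨z, hzseg, hzf⟩ := cross_frontier' hΩopen
    (Convex.isPreconnected (convex_segment p (p + c • v)))
    (left_mem_segment ℝ p (p + c • v)) hp (right_mem_segment ℝ p (p + c • v)) hq
  rw [segment_eq_image'] at hzseg
  obtain ⟨t, ht, rfl⟩ := hzseg
  have hz' : p + t • (p + c • v - p) = p + (((t : ℝ) : 𝕜) * c) • v := by
    rw [add_sub_cancel_left, RCLike.real_smul_eq_coe_smul (K := 𝕜), smul_smul]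
  have hmem : p + t • (p + c • v - p) ∈ {q | ∃ a : 𝕜, q = p + a • v} ∩ frontier Ω :=
    ⟨⟨_, hz'⟩, hzf⟩
  have hle := Metric.infDist_le_dist_of_mem (x := p) hmem
  have hdist : dist p (p + t • (p + c • v - p)) ≤ ‖c‖ * ‖v‖ := by
    rw [dist_self_add_right, add_sub_cancel_left, norm_smul, norm_smul]
    have h1 : ‖t‖ ≤ 1 := by rw [Real.norm_eq_abs, abs_of_nonneg ht.1]; exact ht.2
    calc ‖t‖ * (‖c‖ * ‖v‖) ≤ 1 * (‖c‖ * ‖v‖) :=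
          mul_le_mul_of_nonneg_right h1 (by positivity)
      _ = ‖c‖ * ‖v‖ := one_mul _
  exact absurd (le_trans hle hdist) (not_le.mpr hc)

lemma line_inter_frontier_nonempty' {𝕜 : Type*} [RCLike 𝕜] {d : ℕ}
    {Ω : Set (EuclideanSpace 𝕜 (Fin d))} (hΩopen : IsOpen Ω) (hΩbdd : Bornology.IsBounded Ω)
    {p v : EuclideanSpace 𝕜 (Fin d)} (hp : p ∈ Ω) (hv : v ≠ 0) :
    ({q | ∃ c : 𝕜, q = p + c • v} ∩ frontier Ω).Nonempty := by
  obtain ⟨R, hR0, hR⟩ := hΩbdd.subset_closedBall_lt 0 p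
  have hvpos : (0:ℝ) < ‖v‖ := norm_pos_iff.mpr hv
  set T : ℝ := (R + 1) / ‖v‖ with hT
  have hout : p + T • v ∉ Ω := by
    intro hmem
    have := hR hmem
    rw [Metric.mem_closedBall, dist_comm, dist_self_add_right, norm_smul, Real.norm_eq_abs,
      abs_of_pos (by positivity), div_mul_cancel₀ _ hvpos.ne'] at this
    linarith
  obtain ⟨z, hzseg, hzf⟩ := cross_frontier' hΩopen
    (Convex.isPreconnected (convex_segment p (p + T • v)))
    (left_mem_segment ℝ p (p + T • v)) hp (right_mem_segment ℝ p (p + T • v)) hout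
  rw [segment_eq_image'] at hzseg
  obtain ⟨t, _, rfl⟩ := hzseg
  refine ⟨_, ⟨((t * T : ℝ) : 𝕜), ?_⟩, hzf⟩
  show p + t • (p + T • v - p) = _
  rw [add_sub_cancel_left, smul_smul, RCLike.real_smul_eq_coe_smul (K := 𝕜)]

lemma lineBdryDist_pos' {𝕜 : Type*} [RCLike 𝕜] {d : ℕ}
    {Ω : Set (EuclideanSpace 𝕜 (Fin d))} (hΩopen : IsOpen Ω) (hΩbdd : Bornology.IsBounded Ω)
    {p v : EuclideanSpace 𝕜 (Fin d)} (hp : p ∈ Ω) (hv : v ≠ 0) :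
    0 < lineBdryDist 𝕜 Ω p v := by
  obtain ⟨z, hz⟩ := line_inter_frontier_nonempty' hΩopen hΩbdd hp hv
  have hpf : p ∉ frontier Ω := fun hpf =>
    absurd (Set.mem_inter hp hpf) (by rw [hΩopen.inter_frontier_eq]; exact notMem_empty p)
  have h1 : 0 < Metric.infDist p (frontier Ω) :=
    (isClosed_frontier.notMem_iff_infDist_pos ⟨z, hz.2⟩).mp hpf
  exact lt_of_lt_of_le h1
    (Metric.infDist_le_infDist_of_subset Set.inter_subset_right ⟨z, hz⟩)

/-- lower bound for the distance to the boundary in the direction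
`v = s n + v₀`. -/
theorem stmt_10 {𝕜 : Type*} [RCLike 𝕜] {d : ℕ} (Ω : Set (EuclideanSpace 𝕜 (Fin d)))
    (hΩopen : IsOpen Ω) (hΩne : Ω.Nonempty) (hΩconv : Convex ℝ Ω)
    (hΩbdd : Bornology.IsBounded Ω) (p : EuclideanSpace 𝕜 (Fin d)) (hp : p ∈ Ω)
    (nv v₀ : EuclideanSpace 𝕜 (Fin d)) (hnv : ‖nv‖ = 1) (hv₀ : v₀ ≠ 0) :
    ∀ s : ℝ,
      ‖s • nv + v₀‖ / (|s| / lineBdryDist 𝕜 Ω p nv + ‖v₀‖ / lineBdryDist 𝕜 Ω p v₀) ≤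
        lineBdryDist 𝕜 Ω p (s • nv + v₀) := by
  intro s
  have hnv0 : nv ≠ 0 := by
    intro h; rw [h, norm_zero] at hnv; exact one_ne_zero hnv.symm
  have hδ₁ : 0 < lineBdryDist 𝕜 Ω p nv := lineBdryDist_pos' hΩopen hΩbdd hp hnv0
  have hδ₂ : 0 < lineBdryDist 𝕜 Ω p v₀ := lineBdryDist_pos' hΩopen hΩbdd hp hv₀
  set δ₁ := lineBdryDist 𝕜 Ω p nv with hδ₁def
  set δ₂ := lineBdryDist 𝕜 Ω p v₀ with hδ₂def
  have hv₀pos : 0 < ‖v₀‖ := norm_pos_iff.mpr hv₀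
  set v : EuclideanSpace 𝕜 (Fin d) := s • nv + v₀ with hvdef
  set S : ℝ := |s| / δ₁ + ‖v₀‖ / δ₂ with hSdef
  have hS : 0 < S := by
    have h1 : 0 ≤ |s| / δ₁ := div_nonneg (abs_nonneg s) hδ₁.le
    have h2 : 0 < ‖v₀‖ / δ₂ := div_pos hv₀pos hδ₂
    rw [hSdef]
    exact add_pos_of_nonneg_of_pos h1 h2
  by_cases hv : v = 0
  · rw [hv, norm_zero, zero_div]
    exact Metric.infDist_nonneg
  · have hvpos : 0 < ‖v‖ := norm_pos_iff.mpr hv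
    by_contra hcon
    push_neg at hcon
    have hcon' : Metric.infDist p ({q | ∃ c : 𝕜, q = p + c • v} ∩ frontier Ω) < ‖v‖ / S := hcon
    obtain ⟨q, hqmem, hqd⟩ := (Metric.infDist_lt_iff
      (line_inter_frontier_nonempty' hΩopen hΩbdd hp hv)).mp hcon'
    obtain ⟨⟨c, rfl⟩, hqf⟩ := hqmem
    rw [dist_self_add_right, norm_smul] at hqd
    have hc : ‖c‖ * S < 1 := by
      have h1 : ‖c‖ * ‖v‖ * S < ‖v‖ :=
        calc ‖c‖ * ‖v‖ * S < ‖v‖ / S * S := mul_lt_mul_of_pos_right hqd hS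
          _ = ‖v‖ := div_mul_cancel₀ _ hS.ne'
      nlinarith [norm_nonneg c]
    have hmem : p + c • v ∈ Ω := by
      by_cases hs0 : s = 0
      · have hveq : v = v₀ := by rw [hvdef, hs0, zero_smul, zero_add]
        have hSeq : S = ‖v₀‖ / δ₂ := by rw [hSdef, hs0, abs_zero, zero_div, zero_add]
        have hlt : ‖c‖ * ‖v₀‖ < δ₂ := by
          rw [hSeq] at hc
          calc ‖c‖ * ‖v₀‖ = ‖c‖ * (‖v₀‖ / δ₂) * δ₂ := by field_simp
            _ < 1 * δ₂ := mul_lt_mul_of_pos_right hc hδ₂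
            _ = δ₂ := one_mul δ₂
        rw [hveq]
        exact mem_of_lt_lineBdryDist_aux hΩopen hp hlt
      · have hspos : 0 < |s| := abs_pos.mpr hs0
        set lam : ℝ := |s| / δ₁ / S with hlamdef
        set mu : ℝ := ‖v₀‖ / δ₂ / S with hmudef
        have hlam : 0 < lam := div_pos (div_pos hspos hδ₁) hS
        have hmu : 0 < mu := div_pos (div_pos hv₀pos hδ₂) hS
        have hlammu : lam + mu = 1 := by
          rw [hlamdef, hmudef, ← add_div, ← hSdef, div_self hS.ne']
        set a : ℝ := s / lam with hadef
        set b : ℝ := 1 / mu with hbdef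
        -- the two auxiliary points lie in Ω
        have hx : p + (((a : ℝ) : 𝕜) * c) • nv ∈ Ω := by
          refine mem_of_lt_lineBdryDist_aux hΩopen hp ?_
          rw [norm_mul, RCLike.norm_ofReal, hnv, mul_one, ← hδ₁def]
          have haeq : |a| = δ₁ * S := by
            rw [hadef, abs_div, abs_of_pos hlam, hlamdef]
            field_simp
          rw [haeq]
          nlinarith
        have hy : p + (((b : ℝ) : 𝕜) * c) • v₀ ∈ Ω := by
          refine mem_of_lt_lineBdryDist_aux hΩopen hp ?_
          rw [norm_mul, RCLike.norm_ofReal, ← hδ₂def]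
          have hbeq : |b| = δ₂ * S / ‖v₀‖ := by
            rw [hbdef, abs_div, abs_of_pos hmu, hmudef, abs_one]
            field_simp
          rw [hbeq, div_mul_eq_mul_div, div_mul_eq_mul_div, div_lt_iff₀ hv₀pos]
          nlinarith [mul_pos hδ₂ hv₀pos, hc]
        have hmem' := hΩconv hx hy hlam.le hmu.le hlammu
        have heq : lam • (p + (((a : ℝ) : 𝕜) * c) • nv) + mu • (p + (((b : ℝ) : 𝕜) * c) • v₀)
            = p + c • v := by
          rw [hvdef]
          rw [RCLike.real_smul_eq_coe_smul (K := 𝕜) lam, RCLike.real_smul_eq_coe_smul (K := 𝕜) mu,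
            RCLike.real_smul_eq_coe_smul (K := 𝕜) s]
          have hla : ((lam : ℝ) : 𝕜) * (((a : ℝ) : 𝕜) * c) = ((s : ℝ) : 𝕜) * c := by
            rw [← mul_assoc, ← RCLike.ofReal_mul]
            congr 2
            rw [hadef]
            field_simp
          have hmb : ((mu : ℝ) : 𝕜) * (((b : ℝ) : 𝕜) * c) = c := by
            rw [← mul_assoc, ← RCLike.ofReal_mul]
            have : mu * b = 1 := by rw [hbdef]; field_simp
            rw [this, RCLike.ofReal_one, one_mul]
          have hlm : ((lam : ℝ) : 𝕜) + ((mu : ℝ) : 𝕜) = 1 := by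
            rw [← RCLike.ofReal_add, hlammu, RCLike.ofReal_one]
          rw [smul_add, smul_add, smul_smul, smul_smul, hla, hmb, smul_add, smul_smul,
            mul_comm c]
          have hp' : ((lam : ℝ) : 𝕜) • p + ((mu : ℝ) : 𝕜) • p = p := by
            rw [← add_smul, hlm, one_smul]
          rw [add_add_add_comm, hp']
        rw [heq] at hmem'
        exact hmem'
    have : p + c • v ∈ Ω ∩ frontier Ω := ⟨hmem, hqf⟩
    rw [hΩopen.inter_frontier_eq] at this
    exact this
end
end

section
/- Let 𝕂 be ℝ or ℂ and k ≥ 1. There exists ε = ε(k) ∈ (0,1) such that: if u₁,…,u_k ∈ 𝕂^d are Euclidean unit vectors with |⟨u_j, u_l⟩| ≤ ε for all 1 ≤ j < l ≤ k, then u₁,…,u_k are 𝕂-linearly independent and the set B(0,ε) ∩ Span_𝕂{u₁,…,u_k} is contained in the convex hull of (𝕂∩𝔻)u₁ ∪ ⋯ ∪ (𝕂∩𝔻)u_k, where B(0,ε) is the Euclidean ball of radius ε in 𝕂^d and 𝔻 is the open unit disc in ℂ (so 𝕂∩𝔻 = (−1,1) when 𝕂 = ℝ). -/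
open Set Metric MeasureTheory
open scoped ENNReal

noncomputable section

variable (𝕜 : Type*) [RCLike 𝕜] {d : ℕ}

open Finset in
private lemma key_est (𝕜 : Type*) [RCLike 𝕜] {d k : ℕ} (ε : ℝ) (hε : 0 ≤ ε)
    (u : Fin k → EuclideanSpace 𝕜 (Fin d))
    (hu : ∀ j, ‖u j‖ = 1)
    (ho : ∀ j l : Fin k, j ≠ l → ‖(inner 𝕜 (u j) (u l) : 𝕜)‖ ≤ ε)
    (c : Fin k → 𝕜) :
    ∑ j, ‖c j‖ ≤ k * ‖∑ j, c j • u j‖ + ε * k * ∑ j, ‖c j‖ := by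
  set x : EuclideanSpace 𝕜 (Fin d) := ∑ j, c j • u j with hx
  have hjbound : ∀ j, ‖c j‖ ≤ ‖x‖ + ε * ∑ l, ‖c l‖ := by
    intro j
    have h1 : (inner 𝕜 (u j) x : 𝕜) = c j + ∑ l ∈ Finset.univ.erase j, c l * inner 𝕜 (u j) (u l) := by
      rw [hx, inner_sum]
      rw [← Finset.add_sum_erase _ _ (Finset.mem_univ j)]
      have : (inner 𝕜 (u j) (u j) : 𝕜) = 1 := by
        rw [inner_self_eq_norm_sq_to_K, hu j]; norm_num
      simp [inner_smul_right, this, hu j]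
    have h2 : c j = (inner 𝕜 (u j) x : 𝕜) - ∑ l ∈ Finset.univ.erase j, c l * inner 𝕜 (u j) (u l) := by
      rw [h1]; ring
    calc ‖c j‖ ≤ ‖(inner 𝕜 (u j) x : 𝕜)‖ + ‖∑ l ∈ Finset.univ.erase j, c l * inner 𝕜 (u j) (u l)‖ := by
          rw [h2]; exact norm_sub_le _ _
      _ ≤ ‖x‖ + ε * ∑ l, ‖c l‖ := by
          gcongr ?_ + ?_
          · calc ‖(inner 𝕜 (u j) x : 𝕜)‖ ≤ ‖u j‖ * ‖x‖ := norm_inner_le_norm _ _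
              _ = ‖x‖ := by rw [hu j, one_mul]
          · calc ‖∑ l ∈ Finset.univ.erase j, c l * inner 𝕜 (u j) (u l)‖
                ≤ ∑ l ∈ Finset.univ.erase j, ‖c l * (inner 𝕜 (u j) (u l) : 𝕜)‖ := norm_sum_le _ _
              _ ≤ ∑ l ∈ Finset.univ.erase j, ε * ‖c l‖ := by
                  apply Finset.sum_le_sum
                  intro l hl
                  rw [norm_mul, mul_comm]
                  have := ho j l (fun h => (Finset.mem_erase.mp hl).1 h.symm)
                  gcongr
              _ = ε * ∑ l ∈ Finset.univ.erase j, ‖c l‖ := by rw [Finset.mul_sum]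
              _ ≤ ε * ∑ l, ‖c l‖ := by
                  apply mul_le_mul_of_nonneg_left _ hε
                  exact Finset.sum_le_sum_of_subset_of_nonneg (Finset.subset_univ _)
                    (fun _ _ _ => norm_nonneg _)
  calc ∑ j, ‖c j‖ ≤ ∑ _j : Fin k, (‖x‖ + ε * ∑ l, ‖c l‖) :=
        Finset.sum_le_sum fun j _ => hjbound j
    _ = k * ‖x‖ + ε * k * ∑ l, ‖c l‖ := by
        rw [Finset.sum_const, Finset.card_univ, Fintype.card_fin]; ring

/-- Observation 5.2: almost orthogonal unit vectors are linearly independent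
and their span contains a definite ball inside the convex hull of the corresponding discs. -/
theorem stmt_12 (𝕜 : Type*) [RCLike 𝕜] (k : ℕ) (hk : 1 ≤ k) :
    ∃ ε : ℝ, ε ∈ Set.Ioo (0 : ℝ) 1 ∧
      ∀ (d : ℕ) (u : Fin k → EuclideanSpace 𝕜 (Fin d)),
        (∀ j, ‖u j‖ = 1) →
        (∀ j l : Fin k, j < l → ‖(inner 𝕜 (u j) (u l) : 𝕜)‖ ≤ ε) →
        LinearIndependent 𝕜 u ∧
          Metric.ball (0 : EuclideanSpace 𝕜 (Fin d)) ε ∩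
              (Submodule.span 𝕜 (Set.range u) : Set (EuclideanSpace 𝕜 (Fin d))) ⊆
            convexHull ℝ (⋃ j : Fin k, {w | ∃ c : 𝕜, ‖c‖ < 1 ∧ w = c • u j}) := by
  have hK1 : (1:ℝ) ≤ (k:ℝ) := by exact_mod_cast hk
  set K : ℝ := (k:ℝ) with hKdef
  have hKpos : 0 < K := lt_of_lt_of_le one_pos hK1
  set ε : ℝ := 1 / (2*K^2 + 2*K) with hεdef
  have hεpos : 0 < ε := by positivity
  have hεval : ε * (2*K^2 + 2*K) = 1 := by
    rw [hεdef]; field_simp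
  have hεk : ε * K < 1 := by
    rw [hεdef, div_mul_eq_mul_div, div_lt_one (by positivity)]; nlinarith
  refine ⟨ε, ⟨hεpos, ?_⟩, ?_⟩
  · rw [hεdef, div_lt_one (by positivity)]; nlinarith
  intro d u hu hortho
  have ho : ∀ j l : Fin k, j ≠ l → ‖(inner 𝕜 (u j) (u l) : 𝕜)‖ ≤ ε := by
    intro j l hjl
    rcases lt_or_gt_of_ne hjl with h | h
    · exact hortho j l h
    · rw [← inner_conj_symm, RCLike.norm_conj]
      exact hortho l j h
  have key := key_est 𝕜 ε hεpos.le u hu ho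
  have hkey2 : ∀ c : Fin k → 𝕜, ‖∑ j, c j • u j‖ < ε → ∀ j, K * ‖c j‖ < 1 := by
    intro c hx j
    have hS := key c
    have hSnn : (0:ℝ) ≤ ∑ l, ‖c l‖ := Finset.sum_nonneg fun _ _ => norm_nonneg _
    have hj : ‖c j‖ ≤ ∑ l, ‖c l‖ :=
      Finset.single_le_sum (f := fun l => ‖c l‖) (fun _ _ => norm_nonneg _) (Finset.mem_univ j)
    nlinarith [norm_nonneg (c j), mul_pos hKpos hεpos]
  constructor
  · rw [Fintype.linearIndependent_iff]
    intro c hc j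
    have hS := key c
    rw [hc] at hS
    simp only [norm_zero, mul_zero, zero_add] at hS
    have hSnn : (0:ℝ) ≤ ∑ l, ‖c l‖ := Finset.sum_nonneg fun _ _ => norm_nonneg _
    have hS0 : ∑ l, ‖c l‖ = 0 := by nlinarith
    have hj : ‖c j‖ ≤ 0 := by
      rw [← hS0]
      exact Finset.single_le_sum (f := fun l => ‖c l‖) (fun _ _ => norm_nonneg _)
        (Finset.mem_univ j)
    exact norm_eq_zero.mp (le_antisymm hj (norm_nonneg _))
  · rintro x ⟨hxball, hxspan⟩
    obtain ⟨c, hc⟩ := (Submodule.mem_span_range_iff_exists_fun 𝕜).mp hxspan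
    have hxnorm : ‖x‖ < ε := by rwa [Metric.mem_ball, dist_zero_right] at hxball
    have hcj : ∀ j, K * ‖c j‖ < 1 := hkey2 c (by rwa [hc])
    have hk0 : (k:𝕜) ≠ 0 := Nat.cast_ne_zero.mpr (by omega)
    have hxeq : x = ∑ j, (K⁻¹) • (((k:𝕜) * c j) • u j) := by
      rw [← hc]
      apply Finset.sum_congr rfl
      intro j _
      rw [RCLike.real_smul_eq_coe_smul (K := 𝕜), smul_smul]
      congr 1
      rw [hKdef]
      push_cast
      field_simp
    rw [hxeq]
    apply (convex_convexHull ℝ _).sum_mem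
    · intro j _; positivity
    · rw [Finset.sum_const, Finset.card_univ, Fintype.card_fin, nsmul_eq_mul]
      field_simp
      exact hKdef.symm
    · intro j _
      apply subset_convexHull
      apply Set.mem_iUnion.mpr
      refine ⟨j, (k:𝕜) * c j, ?_, rfl⟩
      rw [norm_mul, RCLike.norm_natCast]
      exact hcj j
end
end
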